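/- Let p be a polynomial in four commuting variables X₀, X₁, X₂, X₃ over ℂ. Then p evaluates to zero at every point of the form (u, conj(u), v, conj(v)) with u, v ∈ ℂ satisfying |u|² + |v|² = 1 if and only if p lies in the ideal of ℂ[X₀,X₁,X₂,X₃] generated by the single polynomial X₀·X₁ + X₂·X₃ − 1. -/

import Mathlib

open MvPolynomial
private lemma real_zero : ∀ (n : ℕ) (q : MvPolynomial (Fin n) ℂ),
    (∀ x : Fin n → ℝ, eval (fun i => (x i : ℂ)) q = 0) → q = 0 := by
  intro n
  induction n with
  | zero =>
    intro q h
    apply MvPolynomial.funext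
    intro x
    rw [map_zero]
    have hx : x = fun i => (((0 : Fin 0 → ℝ) i : ℝ) : ℂ) := Subsingleton.elim _ _
    rw [hx]
    exact h 0
  | succ n ih =>
    intro q h
    have key : ∀ x : Fin n → ℝ,
        Polynomial.map (eval fun i => ((x i : ℂ))) (finSuccEquiv ℂ n q) = 0 := by
      intro x
      apply Polynomial.eq_zero_of_infinite_isRoot
      apply Set.Infinite.mono (s := Set.range (fun t : ℝ => (t : ℂ)))
      · rintro _ ⟨t, rfl⟩
        have h1 := h (Fin.cons t x)
        have hfun : (fun i : Fin (n+1) => ((Fin.cons (α := fun _ => ℝ) t x i : ℝ) : ℂ)) =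
            Fin.cons (t : ℂ) (fun i => (x i : ℂ)) := by
          funext i
          refine Fin.cases rfl (fun j => ?_) i
          simp
        rw [hfun] at h1
        rw [eval_eq_eval_mv_eval'] at h1
        exact h1
      · exact Set.infinite_range_of_injective (fun a b hab => by exact_mod_cast hab)
    have hc : finSuccEquiv ℂ n q = 0 := by
      apply Polynomial.ext
      intro k
      rw [Polynomial.coeff_zero]
      apply ih
      intro x
      have := key x
      have := congrArg (fun P => Polynomial.coeff P k) this
      simpa using this
    have := congrArg (finSuccEquiv ℂ n).symm hc
    simpa using this

noncomputable def sA : Fin 4 → MvPolynomial (Fin 3) ℂ :=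
  ![2 * X 0 + C Complex.I * (2 * X 1),
    2 * X 0 - C Complex.I * (2 * X 1),
    2 * X 2 + C Complex.I * (X 0 ^ 2 + X 1 ^ 2 + X 2 ^ 2 - 1),
    2 * X 2 - C Complex.I * (X 0 ^ 2 + X 1 ^ 2 + X 2 ^ 2 - 1)]

noncomputable def sd : MvPolynomial (Fin 3) ℂ := X 0 ^ 2 + X 1 ^ 2 + X 2 ^ 2 + 1

noncomputable def spt (x : Fin 3 → ℂ) : Fin 4 → ℂ := fun i => eval x (sA i) / eval x sd

noncomputable def clearF (p : MvPolynomial (Fin 4) ℂ) : MvPolynomial (Fin 3) ℂ :=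
  ∑ m ∈ p.support,
    C (coeff m p) * (∏ i, (sA i) ^ (m i)) * sd ^ (p.totalDegree - ∑ i, m i)

private lemma clearing (p : MvPolynomial (Fin 4) ℂ) (x : Fin 3 → ℂ) (hx : eval x sd ≠ 0) :
    eval x (clearF p) = (eval x sd) ^ p.totalDegree * eval (spt x) p := by
  rw [clearF, map_sum, eval_eq' (spt x) p, Finset.mul_sum]
  apply Finset.sum_congr rfl
  intro m hm
  have hdeg : (∑ i, m i) ≤ p.totalDegree := by
    have h1 := MvPolynomial.le_totalDegree hm
    rwa [Finsupp.sum_fintype _ _ (fun i => rfl)] at h1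
  simp only [map_mul, map_prod, map_pow, eval_C, spt]
  rw [show (∏ i, (eval x (sA i) / eval x sd) ^ m i)
      = (∏ i, eval x (sA i) ^ m i) / (eval x sd) ^ (∑ i, m i) by
    rw [← Finset.prod_pow_eq_pow_sum, ← Finset.prod_div_distrib]
    exact Finset.prod_congr rfl fun i _ => div_pow _ _ _]
  rw [pow_sub₀ _ hx hdeg]
  field_simp

private lemma spt_real (x : Fin 3 → ℝ) :
    ∃ u v : ℂ, ‖u‖ ^ 2 + ‖v‖ ^ 2 = 1 ∧
      spt (fun i => (x i : ℂ)) = ![u, starRingEnd ℂ u, v, starRingEnd ℂ v] := by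
  set n : ℝ := x 0 ^ 2 + x 1 ^ 2 + x 2 ^ 2 with hn
  have hn0 : (0:ℝ) ≤ n := by positivity
  have hn1 : n + 1 ≠ 0 := by positivity
  have hd : ((n + 1 : ℝ) : ℂ) ≠ 0 := by exact_mod_cast hn1
  refine ⟨(((2 * x 0 : ℝ) : ℂ) + ((2 * x 1 : ℝ) : ℂ) * Complex.I) / ((n + 1 : ℝ) : ℂ),
          (((2 * x 2 : ℝ) : ℂ) + ((n - 1 : ℝ) : ℂ) * Complex.I) / ((n + 1 : ℝ) : ℂ), ?_, ?_⟩
  · rw [Complex.sq_norm, Complex.sq_norm, map_div₀ Complex.normSq, map_div₀ Complex.normSq,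
      Complex.normSq_add_mul_I, Complex.normSq_add_mul_I, Complex.normSq_ofReal]
    rw [hn]
    field_simp
    ring
  · funext i
    fin_cases i <;>
      simp [spt, sA, sd, map_div₀, Complex.conj_ofReal, map_add, map_mul, Complex.conj_I] <;>
      rw [hn] <;> push_cast <;> ring_nf <;> simp [map_ofNat]

private lemma cover (p : MvPolynomial (Fin 4) ℂ)
    (hp4 : ∀ x : Fin 3 → ℂ, eval x sd ≠ 0 → eval (spt x) p = 0) :
    ∀ a b c d : ℂ, a * b + c * d = 1 → c - d ≠ 2 * Complex.I →
      eval ![a, b, c, d] p = 0 := by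
  intro a b c d hab hcd
  have hL : (1 + Complex.I * (c - d) / 2 : ℂ) ≠ 0 := by
    intro h
    apply hcd
    linear_combination (-2*Complex.I) * h + (c - d) * Complex.I_mul_I
  have h2L : (2 + Complex.I * (c - d) : ℂ) ≠ 0 := fun h => hL (by linear_combination h / 2)
  set x : Fin 3 → ℂ :=
    ![(a + b) / (2 * (1 + Complex.I * (c - d) / 2)),
      (b - a) * Complex.I / (2 * (1 + Complex.I * (c - d) / 2)),
      (c + d) / (2 * (1 + Complex.I * (c - d) / 2))] with hx
  have hsd : eval x sd = 2 / (1 + Complex.I * (c - d) / 2) := by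
    simp only [sd, hx, map_add, map_pow, map_one, eval_X, Matrix.cons_val_zero,
      Matrix.cons_val_one, Matrix.head_cons, Matrix.cons_val_two, Matrix.tail_cons]
    field_simp
    linear_combination 4 * hab +
      ((a - b) ^ 2 + (c - d) ^ 2) * Complex.I_mul_I
  have hsd0 : eval x sd ≠ 0 := by
    rw [hsd]
    exact div_ne_zero two_ne_zero hL
  have hx0 : x 0 = (a + b) / (2 * (1 + Complex.I * (c - d) / 2)) := rfl
  have hx1 : x 1 = (b - a) * Complex.I / (2 * (1 + Complex.I * (c - d) / 2)) := rfl
  have hx2 : x 2 = (c + d) / (2 * (1 + Complex.I * (c - d) / 2)) := rfl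
  have hpt : spt x = ![a, b, c, d] := by
    funext i
    fin_cases i
    · show eval x (sA 0) / eval x sd = a
      rw [show sA 0 = 2 * X 0 + C Complex.I * (2 * X 1) from rfl, hsd]
      simp only [map_add, map_mul, eval_X, eval_C, map_ofNat]
      rw [hx0, hx1]
      field_simp
      linear_combination (b - a) * Complex.I_mul_I
    · show eval x (sA 1) / eval x sd = b
      rw [show sA 1 = 2 * X 0 - C Complex.I * (2 * X 1) from rfl, hsd]
      simp only [map_add, map_sub, map_mul, eval_X, eval_C, map_ofNat]
      rw [hx0, hx1]
      field_simp
      linear_combination (a - b) * Complex.I_mul_I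
    · show eval x (sA 2) / eval x sd = c
      rw [show sA 2 = 2 * X 2 + C Complex.I * (X 0 ^ 2 + X 1 ^ 2 + X 2 ^ 2 - 1) from rfl, hsd]
      simp only [map_add, map_sub, map_mul, map_pow, map_one, eval_X, eval_C, map_ofNat]
      rw [hx0, hx1, hx2]
      field_simp
      linear_combination (4 * Complex.I) * hab +
        ((Complex.I * ((a - b) ^ 2 - (c - d) ^ 2) - 4 * (c - d))) * Complex.I_mul_I
    · show eval x (sA 3) / eval x sd = d
      rw [show sA 3 = 2 * X 2 - C Complex.I * (X 0 ^ 2 + X 1 ^ 2 + X 2 ^ 2 - 1) from rfl, hsd]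
      simp only [map_add, map_sub, map_mul, map_pow, map_one, eval_X, eval_C, map_ofNat]
      rw [hx0, hx1, hx2]
      field_simp
      linear_combination (-4 * Complex.I) * hab +
        (-(Complex.I * ((a - b) ^ 2 - (c - d) ^ 2) - 4 * (c - d))) * Complex.I_mul_I
  have := hp4 x hsd0
  rwa [hpt] at this

private lemma eval_bind₁' (v : Fin 4 → ℂ) (g : Fin 4 → MvPolynomial (Fin 4) ℂ)
    (φ : MvPolynomial (Fin 4) ℂ) :
    eval v (bind₁ g φ) = eval (fun i => eval v (g i)) φ :=
  aeval_bind₁ v g φ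

private lemma division (p : MvPolynomial (Fin 4) ℂ)
    (hcov : ∀ a b c d : ℂ, a * b + c * d = 1 → c - d ≠ 2 * Complex.I →
      eval ![a, b, c, d] p = 0) :
    (X 0 * X 1 + X 2 * X 3 - 1 : MvPolynomial (Fin 4) ℂ) ∣ p := by
  classical
  have hinv : ∀ r : MvPolynomial (Fin 4) ℂ,
      bind₁ (![X 0, X 1 - X 0, X 2, X 3] : Fin 4 → MvPolynomial (Fin 4) ℂ)
        (bind₁ (![X 0, X 1 + X 0, X 2, X 3] : Fin 4 → MvPolynomial (Fin 4) ℂ) r) = r := by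
    intro r
    rw [bind₁_bind₁]
    have hfun : (fun i : Fin 4 =>
        bind₁ (![X 0, X 1 - X 0, X 2, X 3] : Fin 4 → MvPolynomial (Fin 4) ℂ)
          ((![X 0, X 1 + X 0, X 2, X 3] : Fin 4 → MvPolynomial (Fin 4) ℂ) i))
        = (X : Fin 4 → MvPolynomial (Fin 4) ℂ) := by
      funext i
      fin_cases i
      · show bind₁ (![X 0, X 1 - X 0, X 2, X 3] : Fin 4 → MvPolynomial (Fin 4) ℂ) (X 0) = X 0
        simp only [bind₁_X_right, Matrix.cons_val_zero]
      · show bind₁ (![X 0, X 1 - X 0, X 2, X 3] : Fin 4 → MvPolynomial (Fin 4) ℂ)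
            (X 1 + X 0) = X 1
        simp only [map_add, bind₁_X_right, Matrix.cons_val_zero, Matrix.cons_val_one,
          Matrix.head_cons]
        ring
      · show bind₁ (![X 0, X 1 - X 0, X 2, X 3] : Fin 4 → MvPolynomial (Fin 4) ℂ) (X 2) = X 2
        simp only [bind₁_X_right, Matrix.cons_val_two, Matrix.tail_cons, Matrix.head_cons]
      · show bind₁ (![X 0, X 1 - X 0, X 2, X 3] : Fin 4 → MvPolynomial (Fin 4) ℂ) (X 3) = X 3
        simp only [bind₁_X_right, Matrix.cons_val_three, Matrix.tail_cons, Matrix.head_cons]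
    rw [hfun, bind₁_X_left]
    rfl
  set q : MvPolynomial (Fin 4) ℂ :=
    bind₁ (![X 0, X 1 + X 0, X 2, X 3] : Fin 4 → MvPolynomial (Fin 4) ℂ) p with hqdef
  have hqv : ∀ a b c d : ℂ, a ^ 2 + a * b + c * d = 1 → c - d ≠ 2 * Complex.I →
      eval ![a, b, c, d] q = 0 := by
    intro a b c d h1 h2
    rw [hqdef, eval_bind₁']
    have hv : (fun i => eval ![a, b, c, d]
        ((![X 0, X 1 + X 0, X 2, X 3] : Fin 4 → MvPolynomial (Fin 4) ℂ) i))
        = ![a, b + a, c, d] := by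
      funext i
      fin_cases i <;> simp
    rw [hv]
    exact hcov a (b + a) c d (by linear_combination h1) h2
  -- the image of g under finSuccEquiv
  set G : Polynomial (MvPolynomial (Fin 3) ℂ) :=
    finSuccEquiv ℂ 3 (bind₁ (![X 0, X 1 + X 0, X 2, X 3] : Fin 4 → MvPolynomial (Fin 4) ℂ)
      (X 0 * X 1 + X 2 * X 3 - 1)) with hGdef
  have hGrepr : G = Polynomial.X ^ 2 + (Polynomial.C (X 0) * Polynomial.X
      + Polynomial.C (X 1 * X 2 - 1)) := by
    rw [hGdef]
    have hg : bind₁ (![X 0, X 1 + X 0, X 2, X 3] : Fin 4 → MvPolynomial (Fin 4) ℂ)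
        (X 0 * X 1 + X 2 * X 3 - 1 : MvPolynomial (Fin 4) ℂ)
        = X 0 ^ 2 + X 0 * X 1 + X 2 * X 3 - 1 := by
      simp
      ring
    rw [hg]
    rw [show (1 : Fin 4) = Fin.succ 0 from rfl, show (2 : Fin 4) = Fin.succ 1 from rfl,
      show (3 : Fin 4) = Fin.succ 2 from rfl]
    simp only [map_add, map_sub, map_mul, map_pow, map_one, finSuccEquiv_X_zero,
      finSuccEquiv_X_succ]
    ring
  have hrlow : Polynomial.degree (Polynomial.C (X 0) * Polynomial.X
      + Polynomial.C (X 1 * X 2 - 1) : Polynomial (MvPolynomial (Fin 3) ℂ)) < 2 :=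
    lt_of_le_of_lt Polynomial.degree_linear_le (by norm_num)
  have hG : G.Monic := by
    rw [hGrepr]
    exact Polynomial.monic_X_pow_add hrlow
  have hGdeg : G.degree = 2 := by
    rw [hGrepr, Polynomial.degree_add_eq_left_of_degree_lt
      (by rw [Polynomial.degree_X_pow]; exact_mod_cast hrlow), Polynomial.degree_X_pow]
    norm_num
  set Q : Polynomial (MvPolynomial (Fin 3) ℂ) := finSuccEquiv ℂ 3 q with hQdef
  set Rr : Polynomial (MvPolynomial (Fin 3) ℂ) := Q %ₘ G with hRdef
  have hRdeg : Rr.degree ≤ 1 := by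
    have := Polynomial.degree_modByMonic_lt Q hG
    rw [hGdeg] at this
    exact Order.lt_succ_iff.mp this
  have hRrepr : Rr = Polynomial.C (Rr.coeff 1) * Polynomial.X + Polynomial.C (Rr.coeff 0) :=
    Polynomial.eq_X_add_C_of_degree_le_one hRdeg
  -- key evaluation identity
  have hkey : ∀ (w : Fin 3 → ℂ) (aa : ℂ), aa ^ 2 + aa * w 0 + w 1 * w 2 = 1 →
      w 1 - w 2 ≠ 2 * Complex.I →
      eval w (Rr.coeff 1) * aa + eval w (Rr.coeff 0) = 0 := by
    intro w aa hroot hw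
    have hq0 : eval (Fin.cons aa w) q = 0 := by
      have hvec : (![aa, w 0, w 1, w 2] : Fin 4 → ℂ) = Fin.cons aa w := by
        funext i
        fin_cases i <;> rfl
      have := hqv aa (w 0) (w 1) (w 2) hroot hw
      rwa [hvec] at this
    rw [eval_eq_eval_mv_eval'] at hq0
    have hsplit : Polynomial.map (eval w) (finSuccEquiv ℂ 3 q)
        = Polynomial.map (eval w) Rr
          + Polynomial.map (eval w) G * Polynomial.map (eval w) (Q /ₘ G) := by
      rw [← Polynomial.map_mul, ← Polynomial.map_add, hRdef, Polynomial.modByMonic_add_div Q G,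
        hQdef]
    rw [hsplit] at hq0
    have hGeval : Polynomial.eval aa (Polynomial.map (eval w) G) = 0 := by
      rw [hGrepr]
      simp only [Polynomial.map_add, Polynomial.map_mul, Polynomial.map_pow,
        Polynomial.map_X, Polynomial.map_C]
      simp only [Polynomial.eval_add, Polynomial.eval_mul, Polynomial.eval_pow,
        Polynomial.eval_X, Polynomial.eval_C]
      simp only [map_sub, map_mul, map_one, eval_X]
      linear_combination hroot
    rw [Polynomial.eval_add, Polynomial.eval_mul, hGeval, zero_mul, add_zero] at hq0
    rw [hRrepr] at hq0
    simpa using hq0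
  -- coeff 1 of remainder vanishes
  have hprodne : ((X 1 - X 2 - C (2 * Complex.I)) * (X 0 ^ 2 - 4 * (X 1 * X 2 - 1))
      : MvPolynomial (Fin 3) ℂ) ≠ 0 := by
    intro hzero
    have := congrArg (eval (![1, 0, 0] : Fin 3 → ℂ)) hzero
    simp [eval_C] at this
    norm_num at this
  have hr1 : Rr.coeff 1 = 0 := by
    have hz : ∀ w : Fin 3 → ℂ, eval w (Rr.coeff 1 *
        ((X 1 - X 2 - C (2 * Complex.I)) * (X 0 ^ 2 - 4 * (X 1 * X 2 - 1)))) = 0 := by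
      intro w
      rw [map_mul, map_mul]
      by_cases h1 : w 1 - w 2 - 2 * Complex.I = 0
      · have : eval w (X 1 - X 2 - C (2 * Complex.I) : MvPolynomial (Fin 3) ℂ) = 0 := by
          simp only [map_sub, eval_X, eval_C]
          exact h1
        rw [this]
        ring
      · by_cases h2 : w 0 ^ 2 - 4 * (w 1 * w 2 - 1) = 0
        · have : eval w (X 0 ^ 2 - 4 * (X 1 * X 2 - 1) : MvPolynomial (Fin 3) ℂ) = 0 := by
            simp only [map_sub, map_mul, map_pow, map_ofNat, eval_X, map_one]
            exact h2
          rw [this]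
          ring
        · obtain ⟨s, hs⟩ := IsAlgClosed.exists_pow_nat_eq (k := ℂ)
            (w 0 ^ 2 - 4 * (w 1 * w 2 - 1)) two_pos
          have hs0 : s ≠ 0 := by
            intro h
            rw [h] at hs
            simp at hs
            exact h2 hs.symm
          have hwne : w 1 - w 2 ≠ 2 * Complex.I := fun h => h1 (by rw [h]; ring)
          have hroot1 : ((- w 0 + s)/2) ^ 2 + ((- w 0 + s)/2) * w 0 + w 1 * w 2 = 1 := by
            linear_combination hs / 4
          have hroot2 : ((- w 0 - s)/2) ^ 2 + ((- w 0 - s)/2) * w 0 + w 1 * w 2 = 1 := by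
            linear_combination hs / 4
          have e1 := hkey w _ hroot1 hwne
          have e2 := hkey w _ hroot2 hwne
          have : eval w (Rr.coeff 1) * s = 0 := by linear_combination e1 - e2
          rcases mul_eq_zero.mp this with h | h
          · rw [h]; ring
          · exact absurd h hs0
    have := MvPolynomial.funext
      (p := Rr.coeff 1 * ((X 1 - X 2 - C (2 * Complex.I)) * (X 0 ^ 2 - 4 * (X 1 * X 2 - 1))))
      (q := (0 : MvPolynomial (Fin 3) ℂ)) (fun w => by rw [map_zero]; exact hz w)
    rcases mul_eq_zero.mp this with h | h
    · exact h
    · exact absurd h hprodne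
  have hr0 : Rr.coeff 0 = 0 := by
    have hz : ∀ w : Fin 3 → ℂ, eval w (Rr.coeff 0 *
        (X 1 - X 2 - C (2 * Complex.I))) = 0 := by
      intro w
      rw [map_mul]
      by_cases h1 : w 1 - w 2 - 2 * Complex.I = 0
      · have : eval w (X 1 - X 2 - C (2 * Complex.I) : MvPolynomial (Fin 3) ℂ) = 0 := by
          simp only [map_sub, eval_X, eval_C]
          exact h1
        rw [this]
        ring
      · obtain ⟨s, hs⟩ := IsAlgClosed.exists_pow_nat_eq (k := ℂ)
          (w 0 ^ 2 - 4 * (w 1 * w 2 - 1)) two_pos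
        have hwne : w 1 - w 2 ≠ 2 * Complex.I := fun h => h1 (by rw [h]; ring)
        have hroot1 : ((- w 0 + s)/2) ^ 2 + ((- w 0 + s)/2) * w 0 + w 1 * w 2 = 1 := by
          linear_combination hs / 4
        have e1 := hkey w _ hroot1 hwne
        rw [hr1, map_zero, zero_mul, zero_add] at e1
        rw [e1]
        ring
    have hne : (X 1 - X 2 - C (2 * Complex.I) : MvPolynomial (Fin 3) ℂ) ≠ 0 := by
      intro hzero
      have := congrArg (eval (![1, 0, 0] : Fin 3 → ℂ)) hzero
      simp [eval_C, Complex.I_ne_zero] at this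
    have := MvPolynomial.funext
      (p := Rr.coeff 0 * (X 1 - X 2 - C (2 * Complex.I)))
      (q := (0 : MvPolynomial (Fin 3) ℂ)) (fun w => by rw [map_zero]; exact hz w)
    rcases mul_eq_zero.mp this with h | h
    · exact h
    · exact absurd h hne
  have hR0 : Rr = 0 := by
    rw [hRrepr, hr1, hr0]
    simp
  have hGQ : G ∣ Q := (Polynomial.modByMonic_eq_zero_iff_dvd hG).mp hR0
  have hgq : (bind₁ (![X 0, X 1 + X 0, X 2, X 3] : Fin 4 → MvPolynomial (Fin 4) ℂ)
      (X 0 * X 1 + X 2 * X 3 - 1)) ∣ q := by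
    have := map_dvd (finSuccEquiv ℂ 3).symm hGQ
    rw [hGdef, hQdef, AlgEquiv.symm_apply_apply, AlgEquiv.symm_apply_apply] at this
    exact this
  obtain ⟨t, ht⟩ := hgq
  refine ⟨bind₁ (![X 0, X 1 - X 0, X 2, X 3] : Fin 4 → MvPolynomial (Fin 4) ℂ) t, ?_⟩
  have := congrArg (bind₁ (![X 0, X 1 - X 0, X 2, X 3] : Fin 4 → MvPolynomial (Fin 4) ℂ)) ht
  rw [hinv p, map_mul, hinv (X 0 * X 1 + X 2 * X 3 - 1)] at this
  exact this

/-- A polynomial `p ∈ ℂ[X₀,X₁,X₂,X₃]` vanishes at every point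
`(u, conj u, v, conj v)` with `|u|² + |v|² = 1` iff it lies in the ideal
generated by `X₀·X₁ + X₂·X₃ − 1`. -/
theorem vanishes_on_su2_iff_mem_ideal (p : MvPolynomial (Fin 4) ℂ) :
    (∀ u v : ℂ, ‖u‖ ^ 2 + ‖v‖ ^ 2 = 1 →
      MvPolynomial.eval ![u, starRingEnd ℂ u, v, starRingEnd ℂ v] p = 0) ↔
      p ∈ Ideal.span {(X 0 * X 1 + X 2 * X 3 - 1 : MvPolynomial (Fin 4) ℂ)} := by
  constructor
  · intro H
    rw [Ideal.mem_span_singleton]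
    apply division
    apply cover
    intro x hx
    have hF : clearF p = 0 := by
      apply real_zero
      intro y
      have hyd : eval (fun i => (y i : ℂ)) sd
          = ((y 0 ^ 2 + y 1 ^ 2 + y 2 ^ 2 + 1 : ℝ) : ℂ) := by
        simp only [sd, map_add, map_pow, map_one, eval_X]
        push_cast
        ring
      have hy : eval (fun i => (y i : ℂ)) sd ≠ 0 := by
        rw [hyd]
        exact_mod_cast (by positivity : (y 0 ^ 2 + y 1 ^ 2 + y 2 ^ 2 + 1 : ℝ) ≠ 0)
      rw [clearing p _ hy]
      obtain ⟨u, v, huv, hpt⟩ := spt_real y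
      rw [hpt, H u v huv, mul_zero]
    have hcl := clearing p x hx
    rw [hF, map_zero] at hcl
    exact ((mul_eq_zero.mp hcl.symm).resolve_left (pow_ne_zero _ hx))
  · intro hp u v huv
    rw [Ideal.mem_span_singleton] at hp
    obtain ⟨t, rfl⟩ := hp
    rw [map_mul]
    have h0 : eval ![u, starRingEnd ℂ u, v, starRingEnd ℂ v]
        (X 0 * X 1 + X 2 * X 3 - 1 : MvPolynomial (Fin 4) ℂ) = 0 := by
      simp only [map_sub, map_add, map_mul, map_one, eval_X, Matrix.cons_val_zero,
        Matrix.cons_val_one, Matrix.head_cons, Matrix.cons_val_two, Matrix.tail_cons,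
        Matrix.cons_val_three]
      rw [Complex.mul_conj, Complex.mul_conj]
      norm_cast
      rw [Complex.sq_norm u, Complex.sq_norm v] at huv
      exact sub_eq_zero.mpr huv
    rw [h0, zero_mul]
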